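/- Let a, b be odd coprime integers and ε ∈ {±1}. Then the triple (x₁, x₂, x₃) = (L_a, −ε·L_{a+εb}, L_b) satisfies x₁² − x₂² + x₃² + x₁x₂x₃ = 4; equivalently, −L_{a+b} and L_{a−b} are the two roots of the quadratic polynomial X² + L_a·L_b·X − (L_a² + L_b² + 4). -/

import Mathlib

/-- Fibonacci numbers extended to all integer indices. -/
def fibZ : ℤ → ℤ
  | Int.ofNat n => Nat.fib n
  | Int.negSucc n => (-1) ^ n * Nat.fib (n + 1)

lemma fibZ_zero : fibZ 0 = 0 := rfl
lemma fibZ_one : fibZ 1 = 1 := rfl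
lemma fibZ_neg_one : fibZ (-1) = 1 := by decide

lemma fibZ_add_two : ∀ n : ℤ, fibZ (n + 2) = fibZ (n + 1) + fibZ n
  | (n : ℕ) => by
      have h2 : ((n : ℤ) + 2) = ((n + 2 : ℕ) : ℤ) := by push_cast; ring
      have h1 : ((n : ℤ) + 1) = ((n + 1 : ℕ) : ℤ) := by push_cast; ring
      rw [h2, h1]
      show (Nat.fib (n + 2) : ℤ) = Nat.fib (n + 1) + Nat.fib n
      rw [Nat.fib_add_two]; push_cast; ring
  | Int.negSucc 0 => by decide
  | Int.negSucc 1 => by decide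
  | Int.negSucc (k + 2) => by
      have h2 : (Int.negSucc (k + 2)) + 2 = Int.negSucc k := by
        simp [Int.negSucc_eq]; ring
      have h1 : (Int.negSucc (k + 2)) + 1 = Int.negSucc (k + 1) := by
        simp [Int.negSucc_eq]; ring
      rw [h1, h2]
      show ((-1) ^ k * Nat.fib (k + 1) : ℤ)
          = (-1) ^ (k + 1) * Nat.fib (k + 1 + 1) + (-1) ^ (k + 2) * Nat.fib (k + 2 + 1)
      rw [show Nat.fib (k + 2 + 1) = Nat.fib (k + 1) + Nat.fib (k + 2) from Nat.fib_add_two]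
      push_cast; ring

lemma fibZ_sub_one (n : ℤ) : fibZ (n - 1) = fibZ (n + 1) - fibZ n := by
  have h2 := fibZ_add_two (n - 1)
  rw [show n - 1 + 2 = n + 1 from by ring, show n - 1 + 1 = n from by ring] at h2
  linarith

lemma fibZ_add (m : ℤ) : ∀ n : ℤ, fibZ (m + n) = fibZ (m + 1) * fibZ n + fibZ m * fibZ (n - 1) := by
  have key : ∀ n : ℤ, (fibZ (m + n) = fibZ (m + 1) * fibZ n + fibZ m * fibZ (n - 1)) ∧
      (fibZ (m + n + 1) = fibZ (m + 1) * fibZ (n + 1) + fibZ m * fibZ n) := by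
    intro n
    induction n using Int.induction_on with
    | zero =>
        constructor
        · rw [show m + 0 = m from by ring, show (0 : ℤ) - 1 = -1 from by ring,
            fibZ_zero, fibZ_neg_one]; ring
        · rw [show (0 : ℤ) + 1 = 1 from by ring, fibZ_zero, fibZ_one]; ring
    | succ k ih =>
        obtain ⟨ih1, ih2⟩ := ih
        have r3 := fibZ_sub_one (k : ℤ)
        constructor
        · rw [show m + ((k : ℤ) + 1) = m + k + 1 from by ring,
            show ((k : ℤ) + 1) - 1 = k from by ring]
          exact ih2
        · have r1 := fibZ_add_two (m + k)
          have r2 := fibZ_add_two (k : ℤ)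
          rw [show m + ((k : ℤ) + 1) + 1 = m + k + 2 from by ring,
            show ((k : ℤ) + 1 + 1) = k + 2 from by ring, r1, r2]
          linear_combination ih1 + ih2 + fibZ m * r3
    | pred k ih =>
        obtain ⟨ih1, ih2⟩ := ih
        constructor
        · -- fibZ (m + (-k-1)) = fibZ (m+1) * fibZ (-k-1) + fibZ m * fibZ (-k-2)
          have t0 := fibZ_sub_one (m + -(k : ℤ))
          rw [show m + -(k : ℤ) - 1 = m + (-k - 1) from by ring] at t0
          have t1 := fibZ_sub_one (-(k : ℤ))
          have t2 := fibZ_sub_one (-(k : ℤ) - 1)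
          rw [show -(k : ℤ) - 1 + 1 = -k from by ring] at t2
          rw [show (-(k : ℤ) - 1) - 1 = -k - 1 - 1 from by ring] at t2
          rw [show m + (-(k : ℤ) - 1) = m + (-k - 1) from by ring]
          rw [t0, t1, t2]
          linear_combination ih2 - ih1
        · rw [show m + (-(k : ℤ) - 1) + 1 = m + -k from by ring,
            show -(k : ℤ) - 1 + 1 = -k from by ring]
          exact ih1
  exact fun n => (key n).1

lemma fibZ_cassini2 : ∀ k : ℤ, fibZ (2 * k + 2) * fibZ (2 * k) - fibZ (2 * k + 1) ^ 2 = -1 := by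
  intro k
  induction k using Int.induction_on with
  | zero => norm_num; decide
  | succ k ih =>
      have s0 := fibZ_add_two (2 * (k : ℤ))
      have s1 := fibZ_add_two (2 * (k : ℤ) + 1)
      have s2 := fibZ_add_two (2 * (k : ℤ) + 2)
      ring_nf at s0 s1 s2 ih ⊢
      rw [s2, s1, s0]
      rw [s0] at ih
      linear_combination ih
  | pred k ih =>
      have t0 := fibZ_sub_one (-(2 * (k : ℤ)) - 1)
      have t1 := fibZ_sub_one (-(2 * (k : ℤ)))
      have s0 := fibZ_add_two (-(2 * (k : ℤ)))
      ring_nf at t0 t1 s0 ih ⊢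
      rw [t0, t1]
      rw [s0] at ih
      linear_combination ih

lemma fibZ_cassini_odd (n : ℤ) (hn : Odd n) :
    fibZ (n + 1) * fibZ (n - 1) - fibZ n ^ 2 = -1 := by
  obtain ⟨k, rfl⟩ := hn
  have h := fibZ_cassini2 k
  rw [show 2 * k + 1 + 1 = 2 * k + 2 from by ring, show 2 * k + 1 - 1 = 2 * k from by ring]
  exact h

/-- Lucas numbers extended to all integer indices: `L_n = F_{n−1} + F_{n+1}`. -/
def lucZ (n : ℤ) : ℤ := fibZ (n - 1) + fibZ (n + 1)

/-- for `a, b` odd coprime and `ε = ±1`, the triple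
`(x₁,x₂,x₃) = (L_a, −ε·L_{a+εb}, L_b)` solves
`x₁² − x₂² + x₃² − x₁x₂x₃ = −4` (the equation of `S₄^{1,−1,1}`);
equivalently, `−L_{a+b}` and `L_{a−b}` are the two roots of
`X² + L_a·L_b·X − (L_a² + L_b² + 4)`. -/
theorem stmt15 (a b ε : ℤ) (ha : Odd a) (hb : Odd b) (hab : IsCoprime a b)
    (hε : ε = 1 ∨ ε = -1) :
    (lucZ a) ^ 2 - (-ε * lucZ (a + ε * b)) ^ 2 + (lucZ b) ^ 2
        - lucZ a * (-ε * lucZ (a + ε * b)) * lucZ b = -4 ∧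
    (-lucZ (a + b)) ^ 2 + lucZ a * lucZ b * (-lucZ (a + b))
        - (lucZ a ^ 2 + lucZ b ^ 2 + 4) = 0 ∧
    (lucZ (a - b)) ^ 2 + lucZ a * lucZ b * (lucZ (a - b))
        - (lucZ a ^ 2 + lucZ b ^ 2 + 4) = 0 := by
  have ha1 : fibZ (a + 1) = fibZ (a - 1) + fibZ a := by
    have := fibZ_sub_one a; linarith
  have hb1 : fibZ (b + 1) = fibZ (b - 1) + fibZ b := by
    have := fibZ_sub_one b; linarith
  have hA := fibZ_cassini_odd a ha
  have hB := fibZ_cassini_odd b hb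
  rw [ha1] at hA
  rw [hb1] at hB
  have hP0 := fibZ_add a b
  have hP1 := fibZ_add a (b + 1)
  rw [show a + (b + 1) = a + b + 1 from by ring, show b + 1 - 1 = b from by ring] at hP1
  rw [ha1] at hP0 hP1
  rw [hb1] at hP1
  have h1 := fibZ_add (a - b) b
  rw [show a - b + b = a from by ring] at h1
  have h2 := fibZ_add (a - b) (b + 1)
  rw [show a - b + (b + 1) = a + 1 from by ring, show b + 1 - 1 = b from by ring,
    ha1, hb1] at h2
  have hX : fibZ (a - b) = (fibZ (a - 1) + fibZ a) * fibZ b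
      - fibZ a * (fibZ (b - 1) + fibZ b) := by
    linear_combination (fibZ (b - 1) + fibZ b) * h1 - fibZ b * h2 + fibZ (a - b) * hB
  have hY : fibZ (a - b + 1) = fibZ a * fibZ b
      - (fibZ (a - 1) + fibZ a) * fibZ (b - 1) := by
    linear_combination (- fibZ b) * h1 + fibZ (b - 1) * h2 + fibZ (a - b + 1) * hB
  have hLa : lucZ a = 2 * fibZ (a - 1) + fibZ a := by
    unfold lucZ; rw [ha1]; ring
  have hLb : lucZ b = 2 * fibZ (b - 1) + fibZ b := by
    unfold lucZ; rw [hb1]; ring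
  have hLab : lucZ (a + b) = 2 * fibZ (a + b + 1) - fibZ (a + b) := by
    unfold lucZ; rw [fibZ_sub_one (a + b)]; ring
  have hLmb : lucZ (a - b) = 2 * fibZ (a - b + 1) - fibZ (a - b) := by
    unfold lucZ; rw [fibZ_sub_one (a - b)]; ring
  have g2 : (-lucZ (a + b)) ^ 2 + lucZ a * lucZ b * (-lucZ (a + b))
      - (lucZ a ^ 2 + lucZ b ^ 2 + 4) = 0 := by
    rw [hLab, hLa, hLb, hP0, hP1]
    linear_combination (1 - 6 * fibZ b ^ 2 + fibZ (b - 1) * fibZ b + fibZ (b - 1) ^ 2) * hA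
      + (-5 - 5 * fibZ (a - 1) * fibZ a - 5 * fibZ (a - 1) ^ 2) * hB
  have g3 : (lucZ (a - b)) ^ 2 + lucZ a * lucZ b * (lucZ (a - b))
      - (lucZ a ^ 2 + lucZ b ^ 2 + 4) = 0 := by
    rw [hLmb, hLa, hLb, hX, hY]
    linear_combination (1 - 6 * fibZ b ^ 2 + fibZ (b - 1) * fibZ b + fibZ (b - 1) ^ 2) * hA
      + (-5 - 5 * fibZ (a - 1) * fibZ a - 5 * fibZ (a - 1) ^ 2) * hB
  refine ⟨?_, g2, g3⟩
  rcases hε with rfl | rfl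
  · rw [show a + 1 * b = a + b from by ring]
    linear_combination -g2
  · rw [show a + -1 * b = a - b from by ring]
    linear_combination -g3
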